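/- Let C be a directed cycle u_1 u_2 ... u_t u_1 with t ≥ 2, and let Q = C[K̄_2, ..., K̄_2] be the composition of C with t copies of the arcless two-vertex digraph K̄_2 (so Q has 2t vertices u_{i,j}, i ∈ [t], j ∈ {1,2}). Then Q has a good pair rooted at u_{1,1}. Explicitly, the out-branching may be taken as the path u_{1,1} u_{2,1} ... u_{t,1} u_{1,2} u_{2,2} ... u_{t,2}, and an arc-disjoint in-branching rooted at u_{1,1} exists using arcs {u_{i,2} u_{i+1,1} : 1 ≤ i ≤ t−1} ∪ {u_{i,1} u_{i+1,2} : 2 ≤ i ≤ t−1} ∪ {u_{t,1} u_{1,1}, u_{t,2} u_{1,1}}. -/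
import Mathlib


variable {V : Type*}

/-- A digraph (given by its arc relation) is strongly connected. -/
def Strong (A : V → V → Prop) : Prop :=
  ∀ x y : V, Relation.ReflTransGen A x y

/-- `B` is an out-branching of the digraph `A` rooted at `r`:
a spanning subdigraph in which every vertex is reachable from `r`,
every vertex other than `r` has in-degree exactly one, and `r` has in-degree zero. -/
def IsOutBranching (A B : V → V → Prop) (r : V) : Prop :=
  (∀ x y, B x y → A x y) ∧
  (∀ v, Relation.ReflTransGen B r v) ∧
  (∀ v, v ≠ r → Nat.card {u : V // B u v} = 1) ∧
  (∀ u, ¬ B u r)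

/-- `B` is an in-branching of the digraph `A` rooted at `r`. -/
def IsInBranching (A B : V → V → Prop) (r : V) : Prop :=
  (∀ x y, B x y → A x y) ∧
  (∀ v, Relation.ReflTransGen B v r) ∧
  (∀ v, v ≠ r → Nat.card {u : V // B v u} = 1) ∧
  (∀ u, ¬ B r u)

/-- A good pair rooted at `r`: arc-disjoint out- and in-branchings rooted at `r`. -/
def GoodPair (A : V → V → Prop) (r : V) : Prop :=
  ∃ Bp Bm : V → V → Prop, IsOutBranching A Bp r ∧ IsInBranching A Bm r ∧
    ∀ x y, ¬ (Bp x y ∧ Bm x y)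

/-- Arc relation of the composition `T[H_1, …, H_t]`. -/
def CompArc {t : ℕ} (T : Fin t → Fin t → Prop) (n : Fin t → ℕ)
    (H : ∀ i : Fin t, Fin (n i) → Fin (n i) → Prop)
    (x y : (i : Fin t) × Fin (n i)) : Prop :=
  (∃ h : x.1 = y.1, H y.1 (h ▸ x.2) y.2) ∨ (x.1 ≠ y.1 ∧ T x.1 y.1)

/-- A semicomplete digraph: some arc between every pair of distinct vertices. -/
def Semicomplete {α : Type*} (T : α → α → Prop) : Prop :=
  ∀ x y : α, x ≠ y → T x y ∨ T y x

/-- Arcs of the composition `C[K̄₂,…,K̄₂]` of a directed `t`-cycle with copies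
of the arcless two-vertex digraph. -/
def CycComp (t : ℕ) [NeZero t] (x y : Fin t × Fin 2) : Prop := y.1 = x.1 + 1

/-- The explicit out-branching: the Hamiltonian path
`u_{1,1} u_{2,1} … u_{t,1} u_{1,2} u_{2,2} … u_{t,2}` (0-indexed here). -/
def BpEx (t : ℕ) [NeZero t] (x y : Fin t × Fin 2) : Prop :=
  (y.1 = x.1 + 1 ∧ x.1 + 1 ≠ 0 ∧ y.2 = x.2) ∨
  (x.1 + 1 = 0 ∧ x.2 = 0 ∧ y.1 = 0 ∧ y.2 = 1)

/-- The explicit in-branching with arcs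
`{u_{i,2}u_{i+1,1} : 1 ≤ i ≤ t−1} ∪ {u_{i,1}u_{i+1,2} : 2 ≤ i ≤ t−1} ∪
{u_{t,1}u_{1,1}, u_{t,2}u_{1,1}}` (0-indexed here). -/
def BmEx (t : ℕ) [NeZero t] (x y : Fin t × Fin 2) : Prop :=
  (x.2 = 1 ∧ y.2 = 0 ∧ y.1 = x.1 + 1 ∧ x.1 + 1 ≠ 0) ∨
  (x.2 = 0 ∧ y.2 = 1 ∧ x.1 ≠ 0 ∧ y.1 = x.1 + 1 ∧ x.1 + 1 ≠ 0) ∨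
  (x.1 + 1 = 0 ∧ y = (0, 0))

section Helpers
variable {t : ℕ} [NeZero t]

lemma card_one_of_exu {α : Type*} {P : α → Prop} (h : ∃! a, P a) :
    Nat.card {a // P a} = 1 := by
  obtain ⟨a, ha, hu⟩ := h
  have : Nonempty {a // P a} := ⟨⟨a, ha⟩⟩
  have : Subsingleton {a // P a} :=
    ⟨fun x y => Subtype.ext ((hu x.1 x.2).trans (hu y.1 y.2).symm)⟩
  exact Nat.card_unique

lemma fin_one_val (ht : 2 ≤ t) : ((1 : Fin t) : ℕ) = 1 := by
  rw [Fin.val_one']; exact Nat.mod_eq_of_lt (by omega)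

lemma add_one_val' (ht : 2 ≤ t) (a : Fin t) : ((a + 1 : Fin t) : ℕ) = (a.val + 1) % t := by
  rw [Fin.val_add, fin_one_val ht]

lemma add_one_ne_zero_iff (ht : 2 ≤ t) (a : Fin t) : a + 1 ≠ 0 ↔ a.val + 1 < t := by
  rw [Ne, Fin.ext_iff, add_one_val' ht]
  have hlt := a.isLt
  simp only [Fin.val_zero]
  constructor
  · intro h; by_contra hc
    push_neg at hc
    have h2 : a.val + 1 = t := by omega
    rw [h2, Nat.mod_self] at h
    exact h rfl
  · intro h; rw [Nat.mod_eq_of_lt h]; omega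

lemma add_one_val (ht : 2 ≤ t) (a : Fin t) (h : a + 1 ≠ 0) :
    ((a + 1 : Fin t) : ℕ) = a.val + 1 := by
  rw [add_one_val' ht, Nat.mod_eq_of_lt ((add_one_ne_zero_iff ht a).mp h)]

lemma add_one_eq_zero_iff (ht : 2 ≤ t) (a : Fin t) : a + 1 = 0 ↔ a.val = t - 1 := by
  have hlt := a.isLt
  constructor
  · intro h; by_contra hc; exact absurd h ((add_one_ne_zero_iff ht a).mpr (by omega))
  · intro h
    by_contra hc
    have := (add_one_ne_zero_iff ht a).mp hc
    omega

lemma reach_bp (ht : 2 ≤ t) (v : Fin t × Fin 2) :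
    Relation.ReflTransGen (BpEx t) (0, 0) v := by
  obtain ⟨i, j⟩ := v
  suffices H : ∀ n (i : Fin t) (j : Fin 2), i.val + t * j.val = n →
      Relation.ReflTransGen (BpEx t) (0, 0) (i, j) from H _ i j rfl
  intro n
  induction n using Nat.strong_induction_on with
  | _ n IH =>
    intro i j hn
    by_cases hi : i.val = 0
    · have hi0 : i = 0 := Fin.ext hi
      subst hi0
      rcases Fin.exists_fin_two.mp ⟨j, rfl⟩ with h | h
      · subst h; exact Relation.ReflTransGen.refl
      · subst h
        have hn' : n = t := by simpa using hn.symm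
        set u : Fin t := ⟨t - 1, by omega⟩ with hu
        have harc : BpEx t (u, 0) (0, 1) := by
          refine Or.inr ⟨?_, rfl, rfl, rfl⟩
          exact (add_one_eq_zero_iff ht u).mpr rfl
        have hprev : Relation.ReflTransGen (BpEx t) (0, 0) (u, (0 : Fin 2)) :=
          IH (t - 1) (by omega) u 0 (by simp [hu])
        exact hprev.tail harc
    · set u : Fin t := ⟨i.val - 1, by omega⟩ with hu
      have hne : u + 1 ≠ 0 := (add_one_ne_zero_iff ht u).mpr (by have := i.isLt; simp [hu]; omega)
      have heq : u + 1 = i := by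
        apply Fin.ext
        rw [add_one_val ht u hne]
        simp [hu]; omega
      have harc : BpEx t (u, j) (i, j) := Or.inl ⟨heq.symm, hne, rfl⟩
      have hprev : Relation.ReflTransGen (BpEx t) (0, 0) (u, j) := by
        refine IH (n - 1) (by omega) u j ?_
        simp only [hu]
        omega
      exact hprev.tail harc

lemma reach_bm (ht : 2 ≤ t) (v : Fin t × Fin 2) :
    Relation.ReflTransGen (BmEx t) v (0, 0) := by
  obtain ⟨i, j⟩ := v
  suffices H : ∀ n (i : Fin t) (j : Fin 2), t - 1 - i.val = n →
      Relation.ReflTransGen (BmEx t) (i, j) (0, 0) from H _ i j rfl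
  intro n
  induction n using Nat.strong_induction_on with
  | _ n IH =>
    intro i j hn
    by_cases hlast : i.val = t - 1
    · have h0 : i + 1 = 0 := (add_one_eq_zero_iff ht i).mpr hlast
      exact Relation.ReflTransGen.single (Or.inr (Or.inr ⟨h0, rfl⟩))
    · have hlt := i.isLt
      have hne : i + 1 ≠ 0 := (add_one_ne_zero_iff ht i).mpr (by omega)
      have hval : ((i + 1 : Fin t) : ℕ) = i.val + 1 := add_one_val ht i hne
      rcases Fin.exists_fin_two.mp ⟨j, rfl⟩ with h | h
      · subst h
        by_cases hi : i.val = 0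
        · have : i = 0 := Fin.ext hi
          subst this; exact Relation.ReflTransGen.refl
        · have harc : BmEx t (i, 0) (i + 1, 1) :=
            Or.inr (Or.inl ⟨rfl, rfl, fun hc => hi (congrArg Fin.val hc), rfl, hne⟩)
          exact Relation.ReflTransGen.head harc
            (IH (n - 1) (by omega) (i + 1) 1 (by omega))
      · subst h
        have harc : BmEx t (i, 1) (i + 1, 0) := Or.inl ⟨rfl, rfl, rfl, hne⟩
        exact Relation.ReflTransGen.head harc
          (IH (n - 1) (by omega) (i + 1) 0 (by omega))

lemma bp_indeg (ht : 2 ≤ t) (v : Fin t × Fin 2) (hv : v ≠ (0, 0)) :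
    ∃! u, BpEx t u v := by
  obtain ⟨i, j⟩ := v
  by_cases hi : i = 0
  · subst hi
    have hj : j = 1 := by
      rcases Fin.exists_fin_two.mp ⟨j, rfl⟩ with h | h
      · exact absurd (by rw [h]) hv
      · exact h
    subst hj
    refine ⟨(⟨t - 1, by omega⟩, 0), Or.inr ⟨(add_one_eq_zero_iff ht _).mpr rfl, rfl, rfl, rfl⟩, ?_⟩
    rintro ⟨u, k⟩ (⟨h1, h2, h3⟩ | ⟨h1, h2, h3, h4⟩)
    · exact absurd h1.symm h2
    · have : u = (⟨t - 1, by omega⟩ : Fin t) := Fin.ext ((add_one_eq_zero_iff ht u).mp h1)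
      simp_all
  · have hiv : i.val ≠ 0 := fun h => hi (Fin.ext h)
    have hlt := i.isLt
    set u : Fin t := ⟨i.val - 1, by omega⟩ with hu
    have hne : u + 1 ≠ 0 := (add_one_ne_zero_iff ht u).mpr (by simp [hu]; omega)
    have heq : u + 1 = i := by
      apply Fin.ext; rw [add_one_val ht u hne]; simp [hu]; omega
    refine ⟨(u, j), Or.inl ⟨heq.symm, hne, rfl⟩, ?_⟩
    rintro ⟨w, k⟩ (⟨h1, h2, h3⟩ | ⟨h1, h2, h3, h4⟩)
    · simp only at h1 h2 h3
      have hwv := add_one_val ht w h2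
      have h1v := congrArg Fin.val h1
      rw [hwv] at h1v
      have hw : w = u := by apply Fin.ext; simp only [hu]; omega
      rw [hw, ← h3]
    · simp only at h3
      exact absurd h3 hi

lemma bm_outdeg (ht : 2 ≤ t) (v : Fin t × Fin 2) (hv : v ≠ (0, 0)) :
    ∃! u, BmEx t v u := by
  obtain ⟨i, j⟩ := v
  by_cases h0 : i + 1 = 0
  · refine ⟨(0, 0), Or.inr (Or.inr ⟨h0, rfl⟩), ?_⟩
    rintro ⟨w, k⟩ (⟨h1, h2, h3, h4⟩ | ⟨h1, h2, h3, h4, h5⟩ | ⟨h1, h2⟩)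
    · exact absurd h0 h4
    · exact absurd h0 h5
    · exact h2
  · rcases Fin.exists_fin_two.mp ⟨j, rfl⟩ with h | h
    · subst h
      have hi : i ≠ 0 := fun hc => hv (by rw [hc])
      refine ⟨(i + 1, 1), Or.inr (Or.inl ⟨rfl, rfl, hi, rfl, h0⟩), ?_⟩
      rintro ⟨w, k⟩ (⟨h1, h2, h3, h4⟩ | ⟨h1, h2, h3, h4, h5⟩ | ⟨h1, h2⟩)
      · simp at h1
      · simp_all
      · exact absurd h1 h0
    · subst h
      refine ⟨(i + 1, 0), Or.inl ⟨rfl, rfl, rfl, h0⟩, ?_⟩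
      rintro ⟨w, k⟩ (⟨h1, h2, h3, h4⟩ | ⟨h1, h2, h3, h4, h5⟩ | ⟨h1, h2⟩)
      · simp_all
      · simp at h1
      · exact absurd h1 h0

lemma bp_root (ht : 2 ≤ t) (u : Fin t × Fin 2) : ¬ BpEx t u (0, 0) := by
  rintro (⟨h1, h2, h3⟩ | ⟨h1, h2, h3, h4⟩)
  · exact h2 h1.symm
  · simp at h4

lemma bm_root (ht : 2 ≤ t) (u : Fin t × Fin 2) : ¬ BmEx t (0, 0) u := by
  rintro (⟨h1, h2, h3, h4⟩ | ⟨h1, h2, h3, h4, h5⟩ | ⟨h1, h2⟩)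
  · simp at h1
  · exact h3 rfl
  · have := congrArg Fin.val h1
    rw [add_one_val' ht 0] at this
    simp at this
    omega

lemma bp_sub (ht : 2 ≤ t) (x y : Fin t × Fin 2) : BpEx t x y → CycComp t x y := by
  rintro (⟨h1, h2, h3⟩ | ⟨h1, h2, h3, h4⟩)
  · exact h1
  · exact h3.trans h1.symm

lemma bm_sub (ht : 2 ≤ t) (x y : Fin t × Fin 2) : BmEx t x y → CycComp t x y := by
  rintro (⟨h1, h2, h3, h4⟩ | ⟨h1, h2, h3, h4, h5⟩ | ⟨h1, h2⟩)
  · exact h3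
  · exact h4
  · show y.1 = x.1 + 1
    rw [h2, h1]

lemma bp_bm_disj (ht : 2 ≤ t) (x y : Fin t × Fin 2) : ¬ (BpEx t x y ∧ BmEx t x y) := by
  rintro ⟨⟨h1, h2, h3⟩ | ⟨h1, h2, h3, h4⟩,
    ⟨g1, g2, g3, g4⟩ | ⟨g1, g2, g3, g4, g5⟩ | ⟨g1, g2⟩⟩ <;> simp_all

end Helpers

/-- main -/
theorem stmt12 (t : ℕ) [NeZero t] (ht : 2 ≤ t) :
    IsOutBranching (CycComp t) (BpEx t) (0, 0) ∧
    IsInBranching (CycComp t) (BmEx t) (0, 0) ∧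
    ∀ x y, ¬ (BpEx t x y ∧ BmEx t x y) := by
  exact ⟨⟨bp_sub ht, reach_bp ht, fun v hv => card_one_of_exu (bp_indeg ht v hv), bp_root ht⟩,
    ⟨bm_sub ht, reach_bm ht, fun v hv => card_one_of_exu (bm_outdeg ht v hv), bm_root ht⟩,
    bp_bm_disj ht⟩
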